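/- Let T : ℕ → ℝ satisfy T(n) ≤ C for n ≤ 100 and T(n) ≤ 2^{c√n log n} · (2 · T(⌈2n/3⌉ + d⌈√n⌉) + n^e) for n > 100, for constants C, c, d, e. Then T(n) = 2^{O(√n log n)}. -/

import Mathlib

set_option maxHeartbeats 2000000 in
set_option maxRecDepth 100000 in
/-- Recurrence for the fixed-embedding connected case: if `T n ≤ C` for `n ≤ 100` and
`T n ≤ 2^(c√n log n) · (2 T(⌈2n/3⌉ + d⌈√n⌉) + n^e)` for `n > 100`, then
`T n = 2^(O(√n log n))`. -/
theorem stmt7 (T : ℕ → ℝ) (C c : ℝ) (d e : ℕ)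
    (hpos : ∀ n, 0 ≤ T n)
    (hbase : ∀ n ≤ 100, T n ≤ C)
    (hrec : ∀ n, 100 < n → T n ≤
      (2 : ℝ) ^ (c * Real.sqrt n * Real.log n) *
        (2 * T (⌈(2 * n : ℝ) / 3⌉₊ + d * ⌈Real.sqrt n⌉₊) + (n : ℝ) ^ e)) :
    ∃ a : ℝ, ∀ n : ℕ, T n ≤ (2 : ℝ) ^ (a * (Real.sqrt n * Real.log n + 1)) := by
  set N0 : ℕ := (12 * d + 24) ^ 2 + 101 with hN0
  set M : ℝ := (Finset.range (N0 + 1)).sup' (by simp) T + 1 with hMdef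
  have hM1 : 1 ≤ M := by
    have h0 := Finset.le_sup' T (show 0 ∈ Finset.range (N0 + 1) by simp)
    have := hpos 0
    rw [hMdef]; linarith
  have hMb : ∀ n ≤ N0, T n ≤ M := by
    intro n hn
    have h0 := Finset.le_sup' T (show n ∈ Finset.range (N0 + 1) by
      simp; omega)
    rw [hMdef]; linarith
  set a : ℝ := max (max (Real.logb 2 M) (8 * (|c| + 1))) (|c| + 2 * e + 2) with ha
  have habs0 : (0:ℝ) ≤ |c| := abs_nonneg c
  have ha8 : 8 * (|c| + 1) ≤ a := le_trans (le_max_right _ _) (le_max_left _ _)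
  have hae2 : |c| + 2 * e + 2 ≤ a := le_max_right _ _
  have he0 : (0:ℝ) ≤ (e:ℝ) := Nat.cast_nonneg e
  have ha0 : (0:ℝ) ≤ a := by linarith
  have haM : Real.logb 2 M ≤ a := le_trans (le_max_left _ _) (le_max_left _ _)
  refine ⟨a, ?_⟩
  intro n
  induction n using Nat.strong_induction_on with
  | _ n ih =>
  have hsnn : 0 ≤ Real.sqrt n * Real.log n :=
    mul_nonneg (Real.sqrt_nonneg _) (Real.log_natCast_nonneg n)
  by_cases hn : n ≤ N0
  · -- base / bounded region
    have h1 : T n ≤ M := hMb n hn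
    have h2 : M = (2:ℝ) ^ (Real.logb 2 M) :=
      (Real.rpow_logb (by norm_num) (by norm_num) (by linarith)).symm
    calc T n ≤ M := h1
      _ = (2:ℝ) ^ (Real.logb 2 M) := h2
      _ ≤ (2:ℝ) ^ (a * (Real.sqrt n * Real.log n + 1)) := by
          apply Real.rpow_le_rpow_of_exponent_le one_le_two
          nlinarith
  · push_neg at hn
    set m : ℕ := ⌈(2 * (n:ℝ)) / 3⌉₊ + d * ⌈Real.sqrt n⌉₊ with hm
    have hn102 : 102 ≤ n := by omega
    have hn100 : (100:ℝ) ≤ (n:ℝ) := by exact_mod_cast (by omega : (100:ℕ) ≤ n)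
    have hn0 : (0:ℝ) < (n:ℝ) := by linarith
    have hsq10 : (10:ℝ) ≤ Real.sqrt n := by
      rw [Real.le_sqrt (by norm_num) (le_of_lt hn0)]; nlinarith
    have hsnbig : (12 * (d:ℝ) + 24) < Real.sqrt n := by
      rw [Real.lt_sqrt (by positivity)]
      have : ((12 * d + 24) ^ 2 + 101 : ℕ) < n := hn
      have h' : (((12 * d + 24 : ℕ)) ^ 2 : ℝ) + 101 < (n:ℝ) := by exact_mod_cast this
      push_cast at h'
      nlinarith
    have hsqsq : Real.sqrt n * Real.sqrt n = (n:ℝ) := Real.mul_self_sqrt (le_of_lt hn0)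
    have hdd : (0:ℝ) ≤ (d:ℝ) := Nat.cast_nonneg d
    have hc1 : ((⌈(2 * (n:ℝ)) / 3⌉₊ : ℕ) : ℝ) < (2 * (n:ℝ)) / 3 + 1 :=
      Nat.ceil_lt_add_one (by positivity)
    have hc2 : ((⌈Real.sqrt n⌉₊ : ℕ) : ℝ) < Real.sqrt n + 1 :=
      Nat.ceil_lt_add_one (Real.sqrt_nonneg _)
    have hm34 : (m:ℝ) ≤ 3/4 * (n:ℝ) := by
      have hcast : (m:ℝ) = ((⌈(2 * (n:ℝ)) / 3⌉₊ : ℕ) : ℝ) + (d:ℝ) * ((⌈Real.sqrt n⌉₊ : ℕ) : ℝ) := by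
        rw [hm]; push_cast; ring
      rw [hcast]
      nlinarith [mul_le_mul_of_nonneg_left hc2.le hdd,
        mul_le_mul_of_nonneg_left hsnbig.le (Real.sqrt_nonneg (n:ℝ))]
    have hmn : m < n := by
      have : (m:ℝ) < (n:ℝ) := by linarith
      exact_mod_cast this
    have hm1 : 1 ≤ m := by
      have : 0 < ⌈(2 * (n:ℝ)) / 3⌉₊ := Nat.ceil_pos.mpr (by positivity)
      omega
    have hm0 : (0:ℝ) < (m:ℝ) := by exact_mod_cast hm1
    -- sqrt m * log m ≤ 0.87 * (sqrt n * log n)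
    have hsmsqrt : Real.sqrt m ≤ 0.87 * Real.sqrt n := by
      have h2 : Real.sqrt m ≤ Real.sqrt (3/4 * (n:ℝ)) := Real.sqrt_le_sqrt hm34
      have h3 : Real.sqrt (3/4 * (n:ℝ)) = Real.sqrt (3/4) * Real.sqrt n :=
        Real.sqrt_mul (by norm_num) _
      have h4 : Real.sqrt (3/4 : ℝ) ≤ 0.87 := by
        nlinarith [Real.sq_sqrt (show (0:ℝ) ≤ 3/4 by norm_num),
          Real.sqrt_nonneg (3/4 : ℝ)]
      rw [h3] at h2
      have h5 := mul_le_mul_of_nonneg_right h4 (Real.sqrt_nonneg (n:ℝ))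
      linarith
    have hlm : Real.log m ≤ Real.log n :=
      Real.log_le_log hm0 (by exact_mod_cast hmn.le)
    have hlm0 : 0 ≤ Real.log m := Real.log_natCast_nonneg m
    have hsm : Real.sqrt m * Real.log m ≤ 0.87 * (Real.sqrt n * Real.log n) := by
      have := mul_le_mul hsmsqrt hlm hlm0 (by positivity)
      linarith [this]
    -- log n ≥ 2, so sqrt n * log n ≥ 20
    have hln2 : (2:ℝ) ≤ Real.log n := by
      rw [Real.le_log_iff_exp_le hn0]
      have h1 : Real.exp 2 = Real.exp 1 * Real.exp 1 := by
        rw [← Real.exp_add]; norm_num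
      have h2 : Real.exp 1 * Real.exp 1 ≤ 2.7182818286 * 2.7182818286 :=
        mul_le_mul Real.exp_one_lt_d9.le Real.exp_one_lt_d9.le (Real.exp_pos 1).le
          (by norm_num)
      rw [h1]
      linarith
    have hln0 : (0:ℝ) ≤ Real.log n := by linarith
    have hs20 : (20:ℝ) ≤ Real.sqrt n * Real.log n := by nlinarith
    have hlog01 : Real.log n ≤ 0.1 * (Real.sqrt n * Real.log n) := by nlinarith
    have hlogb : Real.logb 2 n ≤ 1.5 * Real.log n := by
      rw [Real.logb, div_le_iff₀ (Real.log_pos (by norm_num))]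
      nlinarith [Real.log_two_gt_d9]
    -- n^e as a power of 2
    have hne : ((n:ℝ)) ^ e = (2:ℝ) ^ ((e:ℝ) * Real.logb 2 n) := by
      have h : (n:ℝ) = (2:ℝ) ^ Real.logb 2 n :=
        (Real.rpow_logb (by norm_num) (by norm_num) hn0).symm
      calc ((n:ℝ)) ^ e = ((2:ℝ) ^ Real.logb 2 n) ^ e := by rw [← h]
        _ = (2:ℝ) ^ (Real.logb 2 n * (e:ℝ)) := by
            rw [Real.rpow_mul (by norm_num : (0:ℝ) ≤ 2), Real.rpow_natCast]
        _ = _ := by rw [mul_comm]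
    have hrecn := hrec n (by omega)
    rw [← hm] at hrecn
    have hTm := ih m hmn
    set s := Real.sqrt n * Real.log n with hs
    set sm := Real.sqrt m * Real.log m with hsmdef
    have hcexp : c * Real.sqrt n * Real.log n = c * s := by rw [hs]; ring
    rw [hcexp] at hrecn
    have hsm0 : 0 ≤ sm := mul_nonneg (Real.sqrt_nonneg _) hlm0
    have key1 : (2:ℝ) ^ (c * s) * (2 * T m) ≤ (2:ℝ) ^ (a * (s + 1) - 1) := by
      have h1 : 2 * T m ≤ 2 * (2:ℝ) ^ (a * (sm + 1)) := by linarith [hTm]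
      calc (2:ℝ) ^ (c * s) * (2 * T m)
          ≤ (2:ℝ) ^ (c * s) * (2 * (2:ℝ) ^ (a * (sm + 1))) := by
            apply mul_le_mul_of_nonneg_left h1 (Real.rpow_nonneg (by norm_num) _)
        _ = (2:ℝ) ^ (c * s + 1 + a * (sm + 1)) := by
            rw [Real.rpow_add (by norm_num : (0:ℝ) < 2),
              Real.rpow_add (by norm_num : (0:ℝ) < 2), Real.rpow_one]
            ring
        _ ≤ (2:ℝ) ^ (a * (s + 1) - 1) := by
            apply Real.rpow_le_rpow_of_exponent_le one_le_two
            nlinarith [mul_le_mul_of_nonneg_left hsm ha0,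
              mul_le_mul_of_nonneg_right ha8 (show (0:ℝ) ≤ s by linarith),
              mul_nonneg (sub_nonneg.mpr (le_abs_self c)) (show (0:ℝ) ≤ s by linarith),
              mul_nonneg habs0 (show (0:ℝ) ≤ s by linarith)]
    have key2 : (2:ℝ) ^ (c * s) * ((n:ℝ)) ^ e ≤ (2:ℝ) ^ (a * (s + 1) - 1) := by
      rw [hne, ← Real.rpow_add (by norm_num : (0:ℝ) < 2)]
      apply Real.rpow_le_rpow_of_exponent_le one_le_two
      have hlb0 : 0 ≤ Real.logb 2 n := Real.logb_nonneg (by norm_num) (by exact_mod_cast (by omega : 1 ≤ n))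
      nlinarith [mul_le_mul_of_nonneg_left hlogb he0,
        mul_le_mul_of_nonneg_left hlog01 he0,
        mul_le_mul_of_nonneg_right hae2 (show (0:ℝ) ≤ s by linarith),
        mul_nonneg (sub_nonneg.mpr (le_abs_self c)) (show (0:ℝ) ≤ s by linarith),
        mul_nonneg he0 (show (0:ℝ) ≤ s by linarith)]
    calc T n ≤ (2:ℝ) ^ (c * s) * (2 * T m + ((n:ℝ)) ^ e) := hrecn
      _ = (2:ℝ) ^ (c * s) * (2 * T m) + (2:ℝ) ^ (c * s) * ((n:ℝ)) ^ e := by ring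
      _ ≤ (2:ℝ) ^ (a * (s + 1) - 1) + (2:ℝ) ^ (a * (s + 1) - 1) := add_le_add key1 key2
      _ = (2:ℝ) ^ (a * (s + 1)) := by
          rw [show a * (s + 1) = 1 + (a * (s + 1) - 1) by ring,
            Real.rpow_add (by norm_num : (0:ℝ) < 2), Real.rpow_one]
          ring
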